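/- The logarithmic potential of the uniform probability measure on the unit circle in the complex plane equals log⁺|z|, i.e., U_μ(z) = log|z| for |z| ≥ 1 and U_μ(z) = 0 for |z| ≤ 1. -/

import Mathlib

open MeasureTheory Real Set Complex
open scoped ENNReal NNReal


lemma integrableOn_log_Ioc {c : ℝ} (hc : 0 < c) : IntegrableOn Real.log (Set.Ioc 0 c) := by
  have hint : IntegrableOn (fun x : ℝ => 2 * x ^ (-(1:ℝ)/2) + c) (Set.Ioc 0 c) := by
    apply Integrable.add
    · exact ((intervalIntegral.intervalIntegrable_rpow' (a := 0) (b := c)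
        (by norm_num : (-1:ℝ) < -(1:ℝ)/2)).1).const_mul 2
    · exact integrableOn_const measure_Ioc_lt_top.ne
  refine hint.mono' Real.measurable_log.aestronglyMeasurable ?_
  filter_upwards [ae_restrict_mem measurableSet_Ioc] with x hx
  have hx0 : 0 < x := hx.1
  have hr : (0:ℝ) < x ^ (-(1:ℝ)/2) := Real.rpow_pos_of_pos hx0 _
  rcases le_or_gt 0 (Real.log x) with h | h
  · rw [Real.norm_eq_abs, _root_.abs_of_nonneg h]
    have := Real.log_le_sub_one_of_pos hx0
    nlinarith [hx.2]
  · rw [Real.norm_eq_abs, _root_.abs_of_neg h]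
    have h2 : Real.log (x ^ (-(1:ℝ)/2)) ≤ x ^ (-(1:ℝ)/2) - 1 := Real.log_le_sub_one_of_pos hr
    rw [Real.log_rpow hx0] at h2
    nlinarith

lemma intervalIntegrable_log_pi : IntervalIntegrable Real.log volume (-π) π := by
  have h1 : IntervalIntegrable Real.log volume 0 π := by
    rw [intervalIntegrable_iff, Set.uIoc_of_le Real.pi_pos.le]
    exact integrableOn_log_Ioc Real.pi_pos
  have h2 := (IntervalIntegrable.iff_comp_neg (f := Real.log)).mp h1
  simp only [Real.log_neg_eq_log, neg_zero] at h2
  exact h2.symm.trans h1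

-- |1 - exp(sI)|^2 = 2 - 2 cos s
lemma abs_sq_one_sub_exp (s : ℝ) :
    (‖1 - Complex.exp (s * Complex.I)‖) ^ 2 = 2 - 2 * Real.cos s := by
  rw [Complex.sq_norm, Complex.normSq_apply]
  simp only [Complex.sub_re, Complex.sub_im, Complex.one_re, Complex.one_im,
    Complex.exp_ofReal_mul_I_re, Complex.exp_ofReal_mul_I_im]
  have := Real.sin_sq_add_cos_sq s
  nlinarith

lemma abs_one_sub_exp_le_two (s : ℝ) :
    ‖1 - Complex.exp (s * Complex.I)‖ ≤ 2 := by
  calc ‖1 - Complex.exp (s * Complex.I)‖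
      ≤ ‖(1:ℂ)‖ + ‖Complex.exp (s * Complex.I)‖ := by
        simpa using norm_sub_le (1 : ℂ) (Complex.exp (s * Complex.I))
    _ = 2 := by rw [Complex.norm_exp_ofReal_mul_I, norm_one]; norm_num

lemma abs_one_sub_exp_ge (s : ℝ) (hs : |s| ≤ π) :
    |s| / 2 ≤ ‖1 - Complex.exp (s * Complex.I)‖ := by
  have hcos := Real.cos_le_one_sub_mul_cos_sq hs
  have hsq := abs_sq_one_sub_exp s
  have hpi : π ≤ 4 := Real.pi_le_four
  have hpi0 : 0 < π := Real.pi_pos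
  have h1 : (|s| / 2) ^ 2 ≤ (‖1 - Complex.exp (s * Complex.I)‖) ^ 2 := by
    rw [hsq]
    have h2 : s ^ 2 / 8 ≤ 2 / π ^ 2 * s ^ 2 := by
      rw [div_eq_mul_inv, mul_comm (2 / π ^ 2), div_eq_mul_inv]
      apply mul_le_mul_of_nonneg_left _ (sq_nonneg s)
      have h16 : (16:ℝ)⁻¹ ≤ (π ^ 2)⁻¹ := by
        apply inv_anti₀ (by positivity)
        nlinarith
      linarith
    have h3 : (|s| / 2) ^ 2 = s ^ 2 / 4 := by
      rw [div_pow, _root_.sq_abs]; norm_num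
    nlinarith
  have := Real.sqrt_le_sqrt h1
  rwa [Real.sqrt_sq (by positivity), Real.sqrt_sq (norm_nonneg _)] at this

lemma integrableOn_log_abs_one_sub_exp :
    IntegrableOn (fun s : ℝ => Real.log (‖1 - Complex.exp (s * Complex.I)‖))
      (Set.Ioc (-π) π) := by
  have hbound : IntegrableOn (fun s : ℝ => Real.log 2 + |Real.log s|) (Set.Ioc (-π) π) := by
    apply Integrable.add
    · exact integrableOn_const measure_Ioc_lt_top.ne
    · exact (intervalIntegrable_log_pi.1).abs
  refine hbound.mono' ?_ ?_
  · apply Measurable.aestronglyMeasurable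
    apply Real.measurable_log.comp
    exact (continuous_norm.comp (by fun_prop)).measurable
  · have h0 : (volume.restrict (Set.Ioc (-π) π)) {(0:ℝ)} = 0 := by
      rw [Measure.restrict_apply (measurableSet_singleton 0)]
      exact measure_mono_null Set.inter_subset_left (measure_singleton 0)
    have hae : ∀ᵐ s ∂(volume.restrict (Set.Ioc (-π) π)), s ≠ 0 := by
      refine ae_iff.2 ?_
      simpa [not_not, Set.setOf_eq_eq_singleton] using h0
    filter_upwards [hae, ae_restrict_mem measurableSet_Ioc] with s hs0 hs
    set A := ‖1 - Complex.exp (s * Complex.I)‖ with hA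
    have habs : |s| ≤ π := abs_le.2 ⟨(hs.1).le, hs.2⟩
    have hA2 : A ≤ 2 := abs_one_sub_exp_le_two s
    have hA1 : |s| / 2 ≤ A := abs_one_sub_exp_ge s habs
    have hspos : 0 < |s| := abs_pos.2 hs0
    have hApos : 0 < A := lt_of_lt_of_le (by positivity) hA1
    rw [Real.norm_eq_abs]
    have hlog2 : Real.log A ≤ Real.log 2 := Real.log_le_log hApos hA2
    have hlow : Real.log (|s| / 2) ≤ Real.log A := Real.log_le_log (by positivity) hA1
    rw [Real.log_div (ne_of_gt hspos) two_ne_zero, Real.log_abs] at hlow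
    rcases abs_cases (Real.log A) with ⟨heq, _⟩ | ⟨heq, _⟩ <;> rw [heq]
    · have := abs_nonneg (Real.log s)
      linarith
    · have h3 : -Real.log s ≤ |Real.log s| := neg_le_abs _
      linarith

lemma periodic_aux (u : ℂ) : Function.Periodic
    (fun s : ℝ => Real.log (‖1 - u * Complex.exp (s * Complex.I)‖)) (2*π) := by
  intro s
  have h : Complex.exp (((s + 2*π : ℝ) : ℂ) * Complex.I) = Complex.exp (s * Complex.I) := by
    push_cast
    rw [add_mul, Complex.exp_add, Complex.exp_two_pi_mul_I, mul_one]
  simp only [h]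

lemma normSq_lower (w : ℂ) (hw : ‖w‖ = 1) {c : ℝ} (hc1 : 1/2 ≤ c) (hc2 : c ≤ 1) :
    ‖1 - w‖ / 2 ≤ ‖1 - (c : ℂ) * w‖ := by
  have hw2 : w.re ^ 2 + w.im ^ 2 = 1 := by
    have := Complex.sq_norm w
    rw [hw] at this
    rw [Complex.normSq_apply] at this
    nlinarith
  have hre : ((c : ℂ) * w).re = c * w.re := by simp [Complex.ofReal_re, Complex.ofReal_im]
  have him : ((c : ℂ) * w).im = c * w.im := by simp [Complex.ofReal_re, Complex.ofReal_im]
  have h1 : (‖1 - w‖ / 2) ^ 2 ≤ (‖1 - (c : ℂ) * w‖) ^ 2 := by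
    rw [div_pow, Complex.sq_norm, Complex.sq_norm, Complex.normSq_apply, Complex.normSq_apply]
    simp only [Complex.sub_re, Complex.sub_im, Complex.one_re, Complex.one_im, hre, him]
    have ht : w.re ≤ 1 := by nlinarith [sq_nonneg w.im]
    nlinarith [sq_nonneg (c - 1), sq_nonneg w.im]
  have := Real.sqrt_le_sqrt h1
  rwa [Real.sqrt_sq (by positivity), Real.sqrt_sq (norm_nonneg _)] at this

lemma abs_one_sub_smul_le (w : ℂ) (hw : ‖w‖ = 1) {c : ℝ} (hc0 : 0 ≤ c) (hc2 : c ≤ 1) :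
    ‖1 - (c : ℂ) * w‖ ≤ 2 := by
  calc ‖1 - (c : ℂ) * w‖
      ≤ ‖(1:ℂ)‖ + ‖(c : ℂ) * w‖ := by
        simpa using norm_sub_le (1 : ℂ) ((c : ℂ) * w)
    _ = 1 + |c| := by rw [norm_one, norm_mul, Complex.norm_real, Real.norm_eq_abs, hw, mul_one]
    _ ≤ 2 := by rw [_root_.abs_of_nonneg hc0]; linarith

lemma K_zero {u : ℂ} (hu : ‖u‖ < 1) :
    ∫ θ in Set.Ioc 0 (2*π), Real.log (‖1 - u * Complex.exp (θ * Complex.I)‖) = 0 := by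
  set g : ℕ → ℝ → ℂ := fun n θ => (u * Complex.exp (θ * Complex.I)) ^ n / n with hg
  have hnorm : ∀ θ : ℝ, ‖u * Complex.exp (θ * Complex.I)‖ < 1 := by
    intro θ
    rw [norm_mul, Complex.norm_exp_ofReal_mul_I,
      mul_one]
    exact hu
  have hslit : ∀ θ : ℝ, (1 - u * Complex.exp (θ * Complex.I)) ∈ Complex.slitPlane := by
    intro θ
    rw [Complex.mem_slitPlane_iff]
    left
    have h1 : |(u * Complex.exp (θ * Complex.I)).re| ≤ ‖u * Complex.exp (θ * Complex.I)‖ :=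
      Complex.abs_re_le_norm _
    have := hnorm θ
    simp only [Complex.sub_re, Complex.one_re]
    cases' abs_le.1 h1 with h2 h3
    linarith
  have hcont : Continuous (fun θ : ℝ => Complex.log (1 - u * Complex.exp (θ * Complex.I))) := by
    refine Continuous.clog ?_ (fun θ => hslit θ)
    fun_prop
  have hInt : IntegrableOn (fun θ : ℝ => Complex.log (1 - u * Complex.exp (θ * Complex.I)))
      (Set.Ioc 0 (2*π)) := hcont.integrableOn_Ioc
  have hsum : ∀ θ : ℝ, HasSum (fun n : ℕ => g n θ)
      (-(Complex.log (1 - u * Complex.exp (θ * Complex.I)))) := by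
    intro θ
    exact Complex.hasSum_taylorSeries_neg_log (hnorm θ)
  have hlog : ∀ θ : ℝ, Complex.log (1 - u * Complex.exp (θ * Complex.I))
      = -∑' n, g n θ := by
    intro θ
    rw [(hsum θ).tsum_eq, neg_neg]
  -- the complex integral is zero
  have hcz : ∫ θ in Set.Ioc 0 (2*π), Complex.log (1 - u * Complex.exp (θ * Complex.I)) = 0 := by
    have hmeas : ∀ n, AEStronglyMeasurable (g n) (volume.restrict (Set.Ioc 0 (2*π))) := by
      intro n
      apply Continuous.aestronglyMeasurable
      fun_prop
    have hbound : ∀ n θ, ‖g n θ‖₊ ≤ ‖u‖₊ ^ n := by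
      intro n θ
      have : ‖g n θ‖ ≤ ‖u‖ ^ n := by
        rw [hg]
        simp only [norm_div, norm_pow]
        rcases Nat.eq_zero_or_pos n with rfl | hn
        · simp
        · have h1 : ‖u * Complex.exp (θ * Complex.I)‖ = ‖u‖ := by
            rw [norm_mul, Complex.norm_exp_ofReal_mul_I,
              mul_one]
          rw [h1]
          have h2 : (1:ℝ) ≤ ‖(n:ℂ)‖ := by
            rw [Complex.norm_natCast]
            exact_mod_cast hn
          calc ‖u‖ ^ n / ‖(n:ℂ)‖ ≤ ‖u‖ ^ n / 1 := by
                apply div_le_div_of_nonneg_left ?_ ?_ h2 <;> positivity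
            _ = ‖u‖ ^ n := by ring
      exact_mod_cast this
    have hnu : ‖u‖₊ < 1 := by
      rw [← NNReal.coe_lt_coe, coe_nnnorm, NNReal.coe_one]
      exact hu
    have hlintegral : ∑' n, ∫⁻ θ in Set.Ioc 0 (2*π), ‖g n θ‖₊ ≠ ⊤ := by
      have h1 : ∀ n : ℕ, (∫⁻ θ in Set.Ioc 0 (2*π), (‖g n θ‖₊ : ℝ≥0∞))
          ≤ (‖u‖₊ : ℝ≥0∞) ^ n * volume (Set.Ioc (0:ℝ) (2*π)) := by
        intro n
        rw [← MeasureTheory.setLIntegral_const (Set.Ioc (0:ℝ) (2*π)) ((‖u‖₊ : ℝ≥0∞) ^ n)]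
        apply lintegral_mono
        intro θ
        exact ENNReal.coe_le_coe.2 ((hbound n θ).trans_eq (by simp))
      refine ne_top_of_le_ne_top ?_ (ENNReal.tsum_le_tsum h1)
      rw [ENNReal.tsum_mul_right, ENNReal.tsum_geometric]
      apply ENNReal.mul_ne_top
      · rw [Ne, ENNReal.inv_eq_top, tsub_eq_zero_iff_le, not_le]
        exact_mod_cast hnu
      · exact measure_Ioc_lt_top.ne
    have hterm : ∀ n, ∫ θ in Set.Ioc 0 (2*π), g n θ = 0 := by
      intro n
      rcases Nat.eq_zero_or_pos n with rfl | hn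
      · simp [hg]
      · obtain ⟨m, rfl⟩ := Nat.exists_eq_succ_of_ne_zero hn.ne'
        rw [← intervalIntegral.integral_of_le (by positivity : (0:ℝ) ≤ 2*π)]
        have hc : ((m:ℂ) + 1) * Complex.I ≠ 0 := by
          apply mul_ne_zero _ Complex.I_ne_zero
          exact_mod_cast Nat.succ_ne_zero m
        calc ∫ θ in (0:ℝ)..(2*π), g (m+1) θ
            = ∫ θ in (0:ℝ)..(2*π),
                (u ^ (m+1) / ((m:ℂ)+1)) * Complex.exp ((((m:ℂ)+1) * Complex.I) * θ) := by
              apply intervalIntegral.integral_congr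
              intro θ _
              rw [hg]
              simp only
              rw [mul_pow, ← Complex.exp_nat_mul]
              push_cast
              ring_nf
          _ = (u ^ (m+1) / ((m:ℂ)+1)) *
                ∫ θ in (0:ℝ)..(2*π), Complex.exp ((((m:ℂ)+1) * Complex.I) * θ) := by
              rw [intervalIntegral.integral_const_mul]
          _ = 0 := by
              rw [integral_exp_mul_complex hc]
              have h1 : (((m:ℂ)+1) * Complex.I) * ((2:ℝ)*π : ℝ) = ((m+1 : ℤ) : ℂ) * (2*π*Complex.I) := by
                push_cast
                ring
              have h2 : Complex.exp ((((m:ℂ)+1) * Complex.I) * ((2:ℝ)*π : ℝ)) = 1 := by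
                rw [h1, Complex.exp_int_mul_two_pi_mul_I]
              rw [h2]
              simp
    calc ∫ θ in Set.Ioc 0 (2*π), Complex.log (1 - u * Complex.exp (θ * Complex.I))
        = ∫ θ in Set.Ioc 0 (2*π), -∑' n, g n θ := by
          apply setIntegral_congr_fun measurableSet_Ioc
          intro θ _
          exact hlog θ
      _ = -∫ θ in Set.Ioc 0 (2*π), ∑' n, g n θ := by rw [integral_neg]
      _ = -∑' n, ∫ θ in Set.Ioc 0 (2*π), g n θ := by
          rw [MeasureTheory.integral_tsum hmeas hlintegral]
      _ = 0 := by simp [hterm]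
  -- take real parts
  calc ∫ θ in Set.Ioc 0 (2*π), Real.log (‖1 - u * Complex.exp (θ * Complex.I)‖)
      = ∫ θ in Set.Ioc 0 (2*π),
          Complex.reCLM (Complex.log (1 - u * Complex.exp (θ * Complex.I))) := by
        apply setIntegral_congr_fun measurableSet_Ioc
        intro θ _
        simp [Complex.log_re]
    _ = Complex.reCLM (∫ θ in Set.Ioc 0 (2*π),
          Complex.log (1 - u * Complex.exp (θ * Complex.I))) :=
        (ContinuousLinearMap.integral_comp_comm Complex.reCLM hInt)
    _ = 0 := by rw [hcz]; simp

lemma J_zero : ∫ s in (-π)..π, Real.log (‖1 - Complex.exp (s * Complex.I)‖) = 0 := by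
  have hle : -π ≤ π := by linarith [Real.pi_pos]
  rw [intervalIntegral.integral_of_le hle]
  set G : ℝ → ℝ := fun s => Real.log (‖1 - Complex.exp (s * Complex.I)‖) with hG
  set r : ℕ → ℝ := fun n => 1 - 1/((n:ℝ)+2) with hr
  have hrposn : ∀ n : ℕ, (0:ℝ) < (n:ℝ) + 2 := fun n => by positivity
  have hr12 : ∀ n, 1/2 ≤ r n := by
    intro n
    have : 1/((n:ℝ)+2) ≤ 1/2 := by
      apply div_le_div_of_nonneg_left (by norm_num) (by norm_num)
      exact_mod_cast le_add_of_nonneg_left (Nat.cast_nonneg n)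
    simp only [hr]
    linarith
  have hr1 : ∀ n, r n < 1 := by
    intro n
    have : 0 < 1/((n:ℝ)+2) := by positivity
    simp only [hr]
    linarith
  have hr0 : ∀ n, 0 ≤ r n := fun n => le_trans (by norm_num) (hr12 n)
  have hrt : Filter.Tendsto r Filter.atTop (nhds 1) := by
    have h1 : Filter.Tendsto (fun n : ℕ => ((n:ℝ)+2)) Filter.atTop Filter.atTop :=
      Filter.tendsto_atTop_add_const_right _ 2 tendsto_natCast_atTop_atTop
    have h2 : Filter.Tendsto (fun n : ℕ => 1/((n:ℝ)+2)) Filter.atTop (nhds 0) := by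
      have h := h1.inv_tendsto_atTop; simp only [one_div]; exact h
    have h3 := Filter.Tendsto.sub (tendsto_const_nhds (x := (1:ℝ))) h2
    simp only [sub_zero] at h3
    convert h3 using 2 with n
  set F : ℕ → ℝ → ℝ := fun n s =>
    Real.log (‖1 - (r n : ℂ) * Complex.exp (s * Complex.I)‖) with hF
  have hFzero : ∀ n, ∫ s in Set.Ioc (-π) π, F n s = 0 := by
    intro n
    have habs : ‖((r n : ℝ) : ℂ)‖ < 1 := by
      rw [Complex.norm_real, Real.norm_eq_abs, _root_.abs_of_nonneg (hr0 n)]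
      exact hr1 n
    have hshift := (periodic_aux ((r n : ℝ) : ℂ)).intervalIntegral_add_eq (-π) 0
    rw [show -π + 2*π = π by ring, zero_add] at hshift
    rw [← intervalIntegral.integral_of_le hle, hshift,
      intervalIntegral.integral_of_le (by positivity : (0:ℝ) ≤ 2*π)]
    exact K_zero habs
  have h0 : (volume.restrict (Set.Ioc (-π) π)) {(0:ℝ)} = 0 := by
    rw [Measure.restrict_apply (measurableSet_singleton 0)]
    exact measure_mono_null Set.inter_subset_left (measure_singleton 0)
  have hae : ∀ᵐ s ∂(volume.restrict (Set.Ioc (-π) π)), s ≠ 0 := by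
    refine ae_iff.2 ?_
    simpa [not_not, Set.setOf_eq_eq_singleton] using h0
  have key : Filter.Tendsto (fun n => ∫ s in Set.Ioc (-π) π, F n s) Filter.atTop
      (nhds (∫ s in Set.Ioc (-π) π, G s)) := by
    apply MeasureTheory.tendsto_integral_of_dominated_convergence
      (bound := fun s => Real.log 2 + |G s|)
    · intro n
      apply Measurable.aestronglyMeasurable
      apply Real.measurable_log.comp
      exact (continuous_norm.comp (by fun_prop)).measurable
    · exact (integrableOn_const measure_Ioc_lt_top.ne).add
        integrableOn_log_abs_one_sub_exp.abs
    · intro n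
      filter_upwards [hae, ae_restrict_mem measurableSet_Ioc] with s hs0 hs
      have habsle : |s| ≤ π := abs_le.2 ⟨(hs.1).le, hs.2⟩
      have hwabs : ‖Complex.exp (s * Complex.I)‖ = 1 :=
        Complex.norm_exp_ofReal_mul_I s
      set A := ‖1 - Complex.exp (s * Complex.I)‖ with hA
      have hA1 : |s| / 2 ≤ A := abs_one_sub_exp_ge s habsle
      have hApos : 0 < A := lt_of_lt_of_le (by positivity : (0:ℝ) < |s|/2) hA1
      have hlow : A / 2 ≤ ‖1 - (r n : ℂ) * Complex.exp (s * Complex.I)‖ :=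
        normSq_lower _ hwabs (hr12 n) (hr1 n).le
      have hup : ‖1 - (r n : ℂ) * Complex.exp (s * Complex.I)‖ ≤ 2 :=
        abs_one_sub_smul_le _ hwabs (hr0 n) (hr1 n).le
      have hpos : 0 < ‖1 - (r n : ℂ) * Complex.exp (s * Complex.I)‖ :=
        lt_of_lt_of_le (by positivity) hlow
      rw [Real.norm_eq_abs]
      have hlog2 : F n s ≤ Real.log 2 := Real.log_le_log hpos hup
      have hlowlog : Real.log (A / 2) ≤ F n s := Real.log_le_log (by positivity) hlow
      rw [Real.log_div (ne_of_gt hApos) two_ne_zero] at hlowlog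
      rcases abs_cases (F n s) with ⟨heq, _⟩ | ⟨heq, _⟩ <;> rw [heq]
      · have := abs_nonneg (G s)
        linarith
      · have h3 : -(G s) ≤ |G s| := neg_le_abs _
        simp only [hG] at h3 ⊢
        linarith
    · filter_upwards [hae, ae_restrict_mem measurableSet_Ioc] with s hs0 hs
      have habsle : |s| ≤ π := abs_le.2 ⟨(hs.1).le, hs.2⟩
      have hA1 : |s| / 2 ≤ ‖1 - Complex.exp (s * Complex.I)‖ :=
        abs_one_sub_exp_ge s habsle
      have hApos : (0:ℝ) < ‖1 - Complex.exp (s * Complex.I)‖ :=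
        lt_of_lt_of_le (by positivity : (0:ℝ) < |s|/2) hA1
      have hcont : ContinuousAt
          (fun c : ℝ => Real.log (‖1 - (c : ℂ) * Complex.exp (s * Complex.I)‖)) 1 := by
        apply ContinuousAt.comp (Real.continuousAt_log (by simpa using ne_of_gt hApos))
        apply Continuous.continuousAt
        exact continuous_norm.comp (by fun_prop)
      have := hcont.tendsto.comp hrt
      simp only [Complex.ofReal_one, one_mul] at this; exact this
  have : Filter.Tendsto (fun _ : ℕ => (0:ℝ)) Filter.atTop (nhds (∫ s in Set.Ioc (-π) π, G s)) := by
    rw [show (fun _ : ℕ => (0:ℝ)) = fun n => ∫ s in Set.Ioc (-π) π, F n s from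
      funext fun n => (hFzero n).symm]
    exact key
  have hfin := tendsto_nhds_unique this tendsto_const_nhds
  simpa [hG] using hfin

lemma interval_subst (z : ℂ) :
    (∫ θ in (0:ℝ)..(2*π), Real.log (‖z - Complex.exp (θ * Complex.I)‖))
      = ∫ θ in (0:ℝ)..(2*π), Real.log (‖1 - z * Complex.exp (θ * Complex.I)‖) := by
  have hpt : ∀ θ : ℝ, ‖z - Complex.exp (θ * Complex.I)‖
      = ‖1 - z * Complex.exp (((-θ : ℝ) : ℂ) * Complex.I)‖ := by
    intro θ
    have h0 : ((-θ : ℝ) : ℂ) * Complex.I + (θ : ℝ) * Complex.I = 0 := by push_cast; ring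
    have h1 : (1 : ℂ) - z * Complex.exp (((-θ : ℝ) : ℂ) * Complex.I)
        = Complex.exp (((-θ : ℝ) : ℂ) * Complex.I) * (Complex.exp ((θ : ℝ) * Complex.I) - z) := by
      rw [mul_sub, ← Complex.exp_add, h0, Complex.exp_zero]
      ring
    rw [h1, norm_mul, Complex.norm_exp_ofReal_mul_I, one_mul,
      norm_sub_rev]
  calc (∫ θ in (0:ℝ)..(2*π), Real.log (‖z - Complex.exp (θ * Complex.I)‖))
      = ∫ θ in (0:ℝ)..(2*π),
          (fun s : ℝ => Real.log (‖1 - z * Complex.exp ((s : ℂ) * Complex.I)‖)) (-θ) := by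
        apply intervalIntegral.integral_congr
        intro θ _
        simp only
        rw [hpt θ]
    _ = ∫ s in (-(2*π))..(-(0:ℝ)),
          Real.log (‖1 - z * Complex.exp ((s : ℂ) * Complex.I)‖) :=
        intervalIntegral.integral_comp_neg (a := 0) (b := 2*π)
          (fun s : ℝ => Real.log (‖1 - z * Complex.exp ((s : ℂ) * Complex.I)‖))
    _ = ∫ θ in (0:ℝ)..(2*π), Real.log (‖1 - z * Complex.exp (θ * Complex.I)‖) := by
        have hsh := (periodic_aux z).intervalIntegral_add_eq (-(2*π)) 0
        rw [show -(2*π) + 2*π = 0 by ring, zero_add] at hsh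
        rw [neg_zero]
        exact hsh

/-- The uniform probability measure on the unit circle in `ℂ`. -/
noncomputable def mT : Measure ℂ :=
  (ENNReal.ofReal (2 * π))⁻¹ •
    Measure.map (fun θ : ℝ => Complex.exp (θ * Complex.I))
      (volume.restrict (Set.Ioc 0 (2 * π)))

/-- The logarithmic potential of a measure on `ℂ`. -/
noncomputable def logPot (μ : Measure ℂ) (z : ℂ) : ℝ :=
  ∫ w, Real.log ‖z - w‖ ∂μ

lemma logPot_mT_eq (z : ℂ) : logPot mT z
    = (2*π)⁻¹ * ∫ θ in (0:ℝ)..(2*π), Real.log (‖z - Complex.exp (θ * Complex.I)‖) := by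
  have hmeas : Measurable fun θ : ℝ => Complex.exp ((θ : ℂ) * Complex.I) := by fun_prop
  have hf : AEStronglyMeasurable (fun w : ℂ => Real.log (‖z - w‖))
      (Measure.map (fun θ : ℝ => Complex.exp ((θ : ℂ) * Complex.I))
        (volume.restrict (Set.Ioc 0 (2*π)))) := by
    apply Measurable.aestronglyMeasurable
    exact Real.measurable_log.comp (continuous_norm.comp (by fun_prop)).measurable
  rw [logPot, mT, integral_smul_measure, integral_map hmeas.aemeasurable hf,
    ENNReal.toReal_inv, ENNReal.toReal_ofReal (by positivity), smul_eq_mul,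
    intervalIntegral.integral_of_le (by positivity : (0:ℝ) ≤ 2*π)]

/-- The logarithmic potential of the uniform probability measure on the unit circle
equals `log⁺ |z|`. -/
theorem logPot_mT (z : ℂ) :
    (1 ≤ ‖z‖ → logPot mT z = Real.log ‖z‖) ∧
    (‖z‖ ≤ 1 → logPot mT z = 0) := by
  have h2π : (0:ℝ) < 2*π := by positivity
  have hKz : ∀ u : ℂ, ‖u‖ < 1 →
      (∫ θ in (0:ℝ)..(2*π), Real.log (‖1 - u * Complex.exp (θ * Complex.I)‖)) = 0 := by
    intro u hu
    rw [intervalIntegral.integral_of_le h2π.le]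
    exact K_zero hu
  have hI1 : ‖z‖ = 1 →
      (∫ θ in (0:ℝ)..(2*π), Real.log (‖z - Complex.exp (θ * Complex.I)‖)) = 0 := by
    intro hz
    rw [interval_subst]
    have hzexp : Complex.exp ((Complex.arg z : ℂ) * Complex.I) = z := by
      have := Complex.norm_mul_exp_arg_mul_I z
      rwa [hz, Complex.ofReal_one, one_mul] at this
    calc ∫ θ in (0:ℝ)..(2*π), Real.log (‖1 - z * Complex.exp (θ * Complex.I)‖)
        = ∫ θ in (0:ℝ)..(2*π),
            (fun s : ℝ => Real.log (‖1 - Complex.exp ((s : ℂ) * Complex.I)‖))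
              (θ + Complex.arg z) := by
          apply intervalIntegral.integral_congr
          intro θ _
          simp only
          have hmul : Complex.exp (((θ + Complex.arg z : ℝ) : ℂ) * Complex.I)
              = z * Complex.exp ((θ : ℂ) * Complex.I) := by
            rw [show ((θ + Complex.arg z : ℝ) : ℂ) * Complex.I
                = (Complex.arg z : ℂ) * Complex.I + (θ : ℂ) * Complex.I by push_cast; ring,
              Complex.exp_add, hzexp]
          rw [← hmul]
      _ = ∫ s in ((0:ℝ) + Complex.arg z)..(2*π + Complex.arg z),
            Real.log (‖1 - Complex.exp ((s : ℂ) * Complex.I)‖) :=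
          intervalIntegral.integral_comp_add_right (a := 0) (b := 2*π)
            (fun s : ℝ => Real.log (‖1 - Complex.exp ((s : ℂ) * Complex.I)‖))
            (Complex.arg z)
      _ = 0 := by
          have hsh := (periodic_aux 1).intervalIntegral_add_eq (Complex.arg z) (-π)
          simp only [one_mul] at hsh
          rw [zero_add, show 2*π + Complex.arg z = Complex.arg z + 2*π by ring, hsh,
            show -π + 2*π = π by ring]
          exact J_zero
  have hIlt : ‖z‖ < 1 →
      (∫ θ in (0:ℝ)..(2*π), Real.log (‖z - Complex.exp (θ * Complex.I)‖)) = 0 := by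
    intro hz
    rw [interval_subst]
    exact hKz z hz
  have hIgt : 1 < ‖z‖ →
      (∫ θ in (0:ℝ)..(2*π), Real.log (‖z - Complex.exp (θ * Complex.I)‖))
        = 2*π * Real.log (‖z‖) := by
    intro hz
    have hz0 : z ≠ 0 := by
      intro h
      rw [h, norm_zero] at hz
      norm_num at hz
    have hinv : ‖z⁻¹‖ < 1 := by
      rw [norm_inv]
      exact inv_lt_one_of_one_lt₀ hz
    have hne : ∀ θ : ℝ, ‖1 - z⁻¹ * Complex.exp (θ * Complex.I)‖ ≠ 0 := by
      intro θ h
      rw [norm_eq_zero, sub_eq_zero] at h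
      have habs : ‖z⁻¹ * Complex.exp ((θ : ℂ) * Complex.I)‖ = 1 := by
        rw [← h, norm_one]
      rw [norm_mul, Complex.norm_exp_ofReal_mul_I, mul_one, norm_inv] at habs
      rw [norm_inv, habs] at hinv
      norm_num at hinv
    have hcont : Continuous
        (fun θ : ℝ => Real.log (‖1 - z⁻¹ * Complex.exp ((θ : ℂ) * Complex.I)‖)) := by
      refine Continuous.log ?_ fun θ => hne θ
      exact continuous_norm.comp (by fun_prop)
    calc (∫ θ in (0:ℝ)..(2*π), Real.log (‖z - Complex.exp (θ * Complex.I)‖))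
        = ∫ θ in (0:ℝ)..(2*π), (Real.log (‖z‖)
            + Real.log (‖1 - z⁻¹ * Complex.exp (θ * Complex.I)‖)) := by
          apply intervalIntegral.integral_congr
          intro θ _
          simp only
          have hfact : z - Complex.exp ((θ : ℂ) * Complex.I)
              = z * (1 - z⁻¹ * Complex.exp ((θ : ℂ) * Complex.I)) := by
            field_simp
          rw [hfact, norm_mul, Real.log_mul (by simpa using hz0) (hne θ)]
      _ = (∫ θ in (0:ℝ)..(2*π), Real.log (‖z‖))
            + ∫ θ in (0:ℝ)..(2*π), Real.log (‖1 - z⁻¹ * Complex.exp (θ * Complex.I)‖) :=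
          intervalIntegral.integral_add intervalIntegrable_const (hcont.intervalIntegrable _ _)
      _ = 2*π * Real.log (‖z‖) := by
          rw [hKz z⁻¹ hinv, intervalIntegral.integral_const, add_zero, smul_eq_mul, sub_zero]
  constructor
  · intro h1
    rcases eq_or_lt_of_le h1 with heq | hlt
    · rw [logPot_mT_eq, hI1 heq.symm, mul_zero, ← heq, Real.log_one]
    · rw [logPot_mT_eq, hIgt hlt, ← mul_assoc, inv_mul_cancel₀ (ne_of_gt h2π), one_mul]
  · intro h2
    rcases eq_or_lt_of_le h2 with heq | hlt
    · rw [logPot_mT_eq, hI1 heq, mul_zero]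
    · rw [logPot_mT_eq, hIlt hlt, mul_zero]
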